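/- Let (β,A) be a numeration system with A ⊂ ℤ[β] and A[β] = ℤ[β] that allows parallel addition. Then for every x ∈ ℤ[β] there exists a ∈ A with x ≡ a (mod β in ℤ[β]), and there exists a' ∈ A with x ≡ a' (mod β−1 in ℤ[β]). In other words, A contains at least one representative of each congruence class modulo β and modulo β−1 in ℤ[β]. -/

import Mathlib

noncomputable section

open Pointwise

/-- `ℤ[β]`: the smallest subring of `ℂ` containing `β` (and hence `ℤ`). -/
def Zring (β : ℂ) : Subring ℂ := Subring.closure {β}

/-- Congruence modulo `α` in `ℤ[β]`: `x ≡ y (mod α)` iff `x - y = α ε` for some `ε ∈ ℤ[β]`. -/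
def CongMod (β α x y : ℂ) : Prop := ∃ ε ∈ Zring β, x - y = α * ε

/-- `A[β]`: values of finite digit strings over `A` in nonnegative powers of `β`. -/
def Apoly (β : ℂ) (A : Set ℂ) : Set ℂ :=
  {x | ∃ (n : ℕ) (a : ℕ → ℂ), (∀ j, a j ∈ A) ∧
    x = ∑ j ∈ Finset.range (n + 1), a j * β ^ j}

/-- A `p`-local digit set conversion in base `β` from `B` to `A`, with memory `r` and
anticipation `t` (`p = r + t + 1`), given by a local rule `Φ`. -/
def IsLocalConv (β : ℂ) (B A : Set ℂ) (r t : ℕ)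
    (Φ : (Fin (r + t + 1) → ℂ) → ℂ) : Prop :=
  (∀ u : Fin (r + t + 1) → ℂ, (∀ i, u i ∈ B) → Φ u ∈ A) ∧
  ∀ w : ℤ → ℂ, (∀ j, w j ∈ B) → (Function.support w).Finite →
    (Function.support (fun j : ℤ => Φ fun i => w (j + (t : ℤ) - ((i : ℕ) : ℤ)))).Finite ∧
    ∑ᶠ j : ℤ, w j * β ^ j =
      ∑ᶠ j : ℤ, (Φ fun i => w (j + (t : ℤ) - ((i : ℕ) : ℤ))) * β ^ j

/-- `(β, A)` allows parallel addition. -/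
def AllowsParAdd (β : ℂ) (A : Set ℂ) : Prop :=
  ∃ (r t : ℕ) (Φ : (Fin (r + t + 1) → ℂ) → ℂ), IsLocalConv β (A + A) A r t Φ

-- auxiliary congruence machinery
def DD (β x : ℂ) : Prop := ∃ ε ∈ Zring β, x = (β - 1) * ε

lemma beta_mem (β : ℂ) : β ∈ Zring β := Subring.subset_closure rfl

lemma DD_zero (β : ℂ) : DD β 0 := ⟨0, (Zring β).zero_mem, by ring⟩

lemma DD_add {β x y : ℂ} (hx : DD β x) (hy : DD β y) : DD β (x + y) := by
  obtain ⟨e, he, hxe⟩ := hx; obtain ⟨f, hf, hyf⟩ := hy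
  exact ⟨e + f, add_mem he hf, by rw [hxe, hyf]; ring⟩

lemma DD_neg {β x : ℂ} (hx : DD β x) : DD β (-x) := by
  obtain ⟨e, he, hxe⟩ := hx
  exact ⟨-e, neg_mem he, by rw [hxe]; ring⟩

lemma DD_sub {β x y : ℂ} (hx : DD β x) (hy : DD β y) : DD β (x - y) := by
  have := DD_add hx (DD_neg hy); simpa [sub_eq_add_neg] using this

lemma DD_mul {β γ x : ℂ} (hγ : γ ∈ Zring β) (hx : DD β x) : DD β (γ * x) := by
  obtain ⟨e, he, hxe⟩ := hx
  exact ⟨γ * e, mul_mem hγ he, by rw [hxe]; ring⟩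

lemma DD_pow_sub_one (β : ℂ) (k : ℕ) : DD β (β ^ k - 1) :=
  ⟨∑ i ∈ Finset.range k, β ^ i, sum_mem fun i _ => pow_mem (beta_mem β) i,
    by rw [mul_comm]; exact (geom_sum_mul β k).symm⟩

lemma key_lemma (β : ℂ) (hβ0 : β ≠ 0) (A : Set ℂ) (h0 : (0 : ℂ) ∈ A)
    (hA : A ⊆ (Zring β : Set ℂ)) (hpar : AllowsParAdd β A) :
    ∀ b ∈ A + A, ∃ c ∈ A, DD β (b - c) := by
  obtain ⟨r, t, Φ, hΦA, hΦc⟩ := hpar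
  have h0AA : (0 : ℂ) ∈ A + A := by simpa using Set.add_mem_add h0 h0
  -- Φ of the zero word is zero
  have hΦ0 : Φ (fun _ => 0) = 0 := by
    obtain ⟨hfin, -⟩ := hΦc (fun _ => 0) (fun _ => h0AA) (by simp)
    by_contra hne
    have hfin2 : (Function.support (fun _ : ℤ => Φ (fun _ => (0 : ℂ)))).Finite := hfin
    rw [Function.support_const hne] at hfin2
    exact Set.infinite_univ hfin2
  intro b hb
  have hbZ : b ∈ Zring β := by
    obtain ⟨x, hx, y, hy, rfl⟩ := hb
    exact add_mem (hA hx) (hA hy)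
  set w : ℤ → ℂ := fun j => if 0 ≤ j ∧ j < ((r:ℤ) + t + 1) then b else 0 with hw
  set w' : ℤ → ℂ := fun j => if 0 ≤ j ∧ j < ((r:ℤ) + t + 1) + 1 then b else 0 with hw'
  have hwm : ∀ j, w j ∈ A + A := by
    intro j; simp only [hw]; split
    · exact hb
    · exact h0AA
  have hw'm : ∀ j, w' j ∈ A + A := by
    intro j; simp only [hw']; split
    · exact hb
    · exact h0AA
  have hwfin : (Function.support w).Finite := by
    apply (Set.finite_Icc (0 : ℤ) (((r:ℤ) + t + 1) - 1)).subset
    intro j hj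
    simp only [Function.mem_support, hw] at hj
    by_contra hc
    simp only [Set.mem_Icc, not_and_or, not_le] at hc
    apply hj
    rw [if_neg]
    rintro ⟨h1, h2⟩
    rcases hc with hc | hc <;> omega
  have hw'fin : (Function.support w').Finite := by
    apply (Set.finite_Icc (0 : ℤ) (((r:ℤ) + t + 1))).subset
    intro j hj
    simp only [Function.mem_support, hw'] at hj
    by_contra hc
    simp only [Set.mem_Icc, not_and_or, not_le] at hc
    apply hj
    rw [if_neg]
    rintro ⟨h1, h2⟩
    rcases hc with hc | hc <;> omega
  obtain ⟨hzfin, hzeq⟩ := hΦc w hwm hwfin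
  obtain ⟨hz'fin, hz'eq⟩ := hΦc w' hw'm hw'fin
  set z : ℤ → ℂ := fun j : ℤ => Φ fun i => w (j + (t : ℤ) - ((i : ℕ) : ℤ)) with hz
  set z' : ℤ → ℂ := fun j : ℤ => Φ fun i => w' (j + (t : ℤ) - ((i : ℕ) : ℤ)) with hz'
  have hiB : ∀ i : Fin (r + t + 1), ((i : ℕ) : ℤ) ≤ (r : ℤ) + t := by
    intro i
    have := i.2
    omega
  have hiB0 : ∀ i : Fin (r + t + 1), (0 : ℤ) ≤ ((i : ℕ) : ℤ) := fun i => Int.natCast_nonneg _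
  -- vanishing of z, z' outside a window
  have hz0 : ∀ j : ℤ, j < -(t : ℤ) ∨ ((r:ℤ) + t + 1) - 1 + r < j → z j = 0 := by
    intro j hj
    have : (fun i : Fin (r + t + 1) => w (j + (t : ℤ) - ((i : ℕ) : ℤ))) = fun _ => 0 := by
      funext i
      have h1 := hiB i; have h2 := hiB0 i
      simp only [hw]
      rw [if_neg]
      rintro ⟨ha, hb'⟩
      rcases hj with hj | hj <;> omega
    rw [show z j = Φ (fun i : Fin (r+t+1) => w (j + (t:ℤ) - ((i:ℕ):ℤ))) from rfl, this]
    exact hΦ0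
  have hz'0 : ∀ j : ℤ, j < -(t : ℤ) ∨ ((r:ℤ) + t + 1) + r < j → z' j = 0 := by
    intro j hj
    have : (fun i : Fin (r + t + 1) => w' (j + (t : ℤ) - ((i : ℕ) : ℤ))) = fun _ => 0 := by
      funext i
      have h1 := hiB i; have h2 := hiB0 i
      simp only [hw']
      rw [if_neg]
      rintro ⟨ha, hb'⟩
      rcases hj with hj | hj <;> omega
    rw [show z' j = Φ (fun i : Fin (r+t+1) => w' (j + (t:ℤ) - ((i:ℕ):ℤ))) from rfl, this]
    exact hΦ0
  have hzA : ∀ j, z j ∈ A := fun j => hΦA _ (fun i => hwm _)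
  have hz'A : ∀ j, z' j ∈ A := fun j => hΦA _ (fun i => hw'm _)
  set S : Finset ℤ := Finset.Icc (-(t : ℤ)) (((r:ℤ) + t + 1) + r) with hS
  -- finsum to finset sums, all over S
  have hEw : ∑ᶠ j : ℤ, w j * β ^ j = ∑ j ∈ S, w j * β ^ j := by
    apply finsum_eq_finset_sum_of_support_subset
    intro j hj
    have hj' : w j ≠ 0 := by
      intro h; apply hj; simp [h]
    simp only [hw] at hj'
    simp only [hS, Finset.coe_Icc, Set.mem_Icc]
    by_contra hc
    apply hj'
    rw [if_neg]
    rintro ⟨h1, h2⟩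
    simp only [not_and_or, not_le] at hc
    rcases hc with hc | hc <;> omega
  have hEw' : ∑ᶠ j : ℤ, w' j * β ^ j = ∑ j ∈ S, w' j * β ^ j := by
    apply finsum_eq_finset_sum_of_support_subset
    intro j hj
    have hj' : w' j ≠ 0 := by
      intro h; apply hj; simp [h]
    simp only [hw'] at hj'
    simp only [hS, Finset.coe_Icc, Set.mem_Icc]
    by_contra hc
    apply hj'
    rw [if_neg]
    rintro ⟨h1, h2⟩
    simp only [not_and_or, not_le] at hc
    rcases hc with hc | hc <;> omega
  have hEz : ∑ᶠ j : ℤ, z j * β ^ j = ∑ j ∈ S, z j * β ^ j := by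
    apply finsum_eq_finset_sum_of_support_subset
    intro j hj
    have hj' : z j ≠ 0 := by
      intro h; apply hj; simp [h]
    simp only [hS, Finset.coe_Icc, Set.mem_Icc]
    by_contra hc
    apply hj'
    apply hz0
    simp only [not_and_or, not_le] at hc
    rcases hc with hc | hc <;> omega
  have hEz' : ∑ᶠ j : ℤ, z' j * β ^ j = ∑ j ∈ S, z' j * β ^ j := by
    apply finsum_eq_finset_sum_of_support_subset
    intro j hj
    have hj' : z' j ≠ 0 := by
      intro h; apply hj; simp [h]
    simp only [hS, Finset.coe_Icc, Set.mem_Icc]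
    by_contra hc
    apply hj'
    apply hz'0
    simp only [not_and_or, not_le] at hc
    rcases hc with hc | hc <;> omega
  have hzS : ∑ j ∈ S, z j * β ^ j = ∑ j ∈ S, w j * β ^ j := by
    rw [← hEz, ← hEw]; exact hzeq.symm
  have hz'S : ∑ j ∈ S, z' j * β ^ j = ∑ j ∈ S, w' j * β ^ j := by
    rw [← hEz', ← hEw']; exact hz'eq.symm
  -- difference of the two converted sums
  have hzz' : ∑ j ∈ S, z' j * β ^ j - ∑ j ∈ S, z j * β ^ j = b * β ^ (((r + t + 1 : ℕ)) : ℤ) := by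
    rw [hzS, hz'S, ← Finset.sum_sub_distrib]
    rw [Finset.sum_eq_single (((r + t + 1 : ℕ)) : ℤ)]
    · simp only [hw, hw']
      rw [if_pos, if_neg]
      · ring
      · rintro ⟨h1, h2⟩; omega
      · constructor <;> omega
    · intro j hjS hjN
      have : w' j = w j := by
        simp only [hw, hw']
        by_cases hc : 0 ≤ j ∧ j < ((r:ℤ) + t + 1)
        · rw [if_pos hc, if_pos ⟨hc.1, by omega⟩]
        · rw [if_neg hc, if_neg]
          rintro ⟨h1, h2⟩
          exact hc ⟨h1, by omega⟩
      rw [this]; ring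
    · intro hNS
      exfalso
      apply hNS
      simp only [hS, Finset.mem_Icc]
      omega
  -- ζ : left-boundary pattern
  set ζ : ℤ → ℂ := fun m => Φ (fun i => if 0 ≤ m + (t:ℤ) - ((i:ℕ):ℤ) then b else 0) with hζ
  have hcA : Φ (fun _ => b) ∈ A := hΦA _ (fun i => hb)
  have hzζ : ∀ j : ℤ, j ≤ (r:ℤ) → z j = ζ j := by
    intro j hj
    rw [show z j = Φ (fun i : Fin (r+t+1) => w (j + (t:ℤ) - ((i:ℕ):ℤ))) from rfl,
        show ζ j = Φ (fun i : Fin (r+t+1) => if 0 ≤ j + (t:ℤ) - ((i:ℕ):ℤ) then b else 0) from rfl]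
    congr 1
    funext i
    have h1 := hiB i; have h2 := hiB0 i
    simp only [hw]
    by_cases hk : 0 ≤ j + (t:ℤ) - ((i:ℕ):ℤ)
    · rw [if_pos ⟨hk, by omega⟩, if_pos hk]
    · rw [if_neg (fun hc => hk hc.1), if_neg hk]
  have hz'ζ : ∀ j : ℤ, j ≤ (r:ℤ) + 1 → z' j = ζ j := by
    intro j hj
    rw [show z' j = Φ (fun i : Fin (r+t+1) => w' (j + (t:ℤ) - ((i:ℕ):ℤ))) from rfl,
        show ζ j = Φ (fun i : Fin (r+t+1) => if 0 ≤ j + (t:ℤ) - ((i:ℕ):ℤ) then b else 0) from rfl]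
    congr 1
    funext i
    have h1 := hiB i; have h2 := hiB0 i
    simp only [hw']
    by_cases hk : 0 ≤ j + (t:ℤ) - ((i:ℕ):ℤ)
    · rw [if_pos ⟨hk, by omega⟩, if_pos hk]
    · rw [if_neg (fun hc => hk hc.1), if_neg hk]
  have hshift : ∀ j : ℤ, (r:ℤ) < j → z' (j+1) = z j := by
    intro j hj
    rw [show z' (j+1) = Φ (fun i : Fin (r+t+1) => w' ((j+1) + (t:ℤ) - ((i:ℕ):ℤ))) from rfl,
        show z j = Φ (fun i : Fin (r+t+1) => w (j + (t:ℤ) - ((i:ℕ):ℤ))) from rfl]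
    congr 1
    funext i
    have h1 := hiB i; have h2 := hiB0 i
    simp only [hw, hw']
    by_cases hk : j + (t:ℤ) - ((i:ℕ):ℤ) < (r:ℤ) + t + 1
    · rw [if_pos ⟨by omega, by omega⟩, if_pos ⟨by omega, hk⟩]
    · rw [if_neg (by rintro ⟨-, h⟩; omega), if_neg (by rintro ⟨-, h⟩; omega)]
  have hζtop : ζ ((r:ℤ)+1) = Φ (fun _ => b) := by
    rw [show ζ ((r:ℤ)+1) = Φ (fun i : Fin (r+t+1) =>
        if 0 ≤ (r:ℤ)+1 + (t:ℤ) - ((i:ℕ):ℤ) then b else 0) from rfl]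
    congr 1
    funext i
    rw [if_pos (by have := hiB i; omega)]
  have hζbot : ζ (-(t:ℤ)-1) = 0 := by
    rw [show ζ (-(t:ℤ)-1) = Φ (fun i : Fin (r+t+1) =>
        if 0 ≤ -(t:ℤ)-1 + (t:ℤ) - ((i:ℕ):ℤ) then b else 0) from rfl]
    have : (fun i : Fin (r+t+1) => if 0 ≤ -(t:ℤ)-1 + (t:ℤ) - ((i:ℕ):ℤ) then b else 0)
        = fun _ => (0:ℂ) := by
      funext i
      rw [if_neg (by have := hiB0 i; omega)]
    rw [this]
    exact hΦ0
  set S1 : Finset ℤ := Finset.Icc (-(t:ℤ)-1) ((r:ℤ)+t+1+r-1) with hS1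
  set W : Finset ℤ := Finset.Icc (-(t:ℤ)-1) ((r:ℤ)+t+1+r) with hW
  have hshiftsum : ∑ j ∈ S, z' j = ∑ j ∈ S1, z' (j+1) := by
    apply Finset.sum_nbij' (fun a : ℤ => a - 1) (fun a : ℤ => a + 1)
    · intro a ha; simp only [hS, hS1, Finset.mem_Icc] at *; omega
    · intro a ha; simp only [hS, hS1, Finset.mem_Icc] at *; omega
    · intro a _; omega
    · intro a _; omega
    · intro a _; norm_num
  have hup1 : ∑ j ∈ S1, z' (j+1) = ∑ j ∈ W, z' (j+1) := by
    apply Finset.sum_subset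
    · intro a ha; simp only [hS1, hW, Finset.mem_Icc] at *; omega
    · intro x hx hx1
      apply hz'0
      simp only [hS1, hW, Finset.mem_Icc] at hx hx1
      right; omega
  have hup2 : ∑ j ∈ S, z j = ∑ j ∈ W, z j := by
    apply Finset.sum_subset
    · intro a ha; simp only [hS, hW, Finset.mem_Icc] at *; omega
    · intro x hx hx1
      apply hz0
      simp only [hS, hW, Finset.mem_Icc] at hx hx1
      left; omega
  have hdown : ∑ j ∈ Finset.Icc (-(t:ℤ)-1) (r:ℤ), (z' (j+1) - z j)
      = ∑ j ∈ W, (z' (j+1) - z j) := by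
    apply Finset.sum_subset
    · intro a ha; simp only [hW, Finset.mem_Icc] at *; omega
    · intro x hx hx1
      simp only [hW, Finset.mem_Icc] at hx hx1
      rw [hshift x (by omega)]
      ring
  have htele : ∑ j ∈ Finset.Icc (-(t:ℤ)-1) (r:ℤ), (ζ (j+1) - ζ j)
      = ζ ((r:ℤ)+1) - ζ (-(t:ℤ)-1) := by
    have hkey := Finset.sum_range_sub (fun k : ℕ => ζ ((k:ℤ) - t - 1)) (r+t+2)
    have hbij : ∑ j ∈ Finset.Icc (-(t:ℤ)-1) (r:ℤ), (ζ (j+1) - ζ j)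
        = ∑ k ∈ Finset.range (r+t+2),
            (ζ (((k+1:ℕ):ℤ) - t - 1) - ζ ((k:ℤ) - t - 1)) := by
      apply Finset.sum_nbij' (fun a : ℤ => (a + t + 1).toNat) (fun k : ℕ => (k:ℤ) - t - 1)
      · intro a ha; simp only [Finset.mem_Icc] at ha; simp only [Finset.mem_range]; omega
      · intro k hk; simp only [Finset.mem_range] at hk; simp only [Finset.mem_Icc]; omega
      · intro a ha; simp only [Finset.mem_Icc] at ha; omega
      · intro k hk; simp only [Finset.mem_range] at hk; omega
      · intro a ha
        simp only [Finset.mem_Icc] at ha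
        have e1 : ((a + (t:ℤ) + 1).toNat : ℤ) = a + t + 1 := Int.toNat_of_nonneg (by omega)
        push_cast [e1]
        have e2 : a + (t:ℤ) + 1 + 1 - t - 1 = a + 1 := by ring
        have e3 : a + (t:ℤ) + 1 - t - 1 = a := by ring
        rw [e2, e3]
    rw [hbij, hkey]
    congr 1
    · congr 1
      push_cast
      ring
    · congr 1
      push_cast
      ring
  have hQQ : ∑ j ∈ S, z' j - ∑ j ∈ S, z j = Φ (fun _ => b) := by
    rw [hshiftsum, hup1, hup2, ← Finset.sum_sub_distrib, ← hdown]
    rw [Finset.sum_congr rfl (fun j hj => by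
      simp only [Finset.mem_Icc] at hj
      rw [hz'ζ (j+1) (by omega), hzζ j (by omega)])]
    rw [htele, hζtop, hζbot, sub_zero]
  -- congruences replacing β^j by 1
  have hDz : DD β (β ^ t * ∑ j ∈ S, (z j * β ^ j) - ∑ j ∈ S, z j) := by
    rw [Finset.mul_sum, ← Finset.sum_sub_distrib]
    apply Finset.sum_induction _ (DD β) (fun _ _ ha hb' => DD_add ha hb') (DD_zero β)
    intro j hj
    simp only [hS, Finset.mem_Icc] at hj
    have hj1 : (0:ℤ) ≤ j + t := by omega
    have htn : (((j+(t:ℤ)).toNat : ℤ)) = j + t := Int.toNat_of_nonneg hj1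
    have hpow : (β:ℂ) ^ t * β ^ j = β ^ ((j + (t:ℤ)).toNat) := by
      calc (β:ℂ) ^ t * β ^ j = β ^ ((t:ℤ)) * β ^ j := by rw [zpow_natCast]
        _ = β ^ ((t:ℤ) + j) := (zpow_add₀ hβ0 _ _).symm
        _ = β ^ ((((j+(t:ℤ)).toNat : ℤ))) := by rw [htn, add_comm]
        _ = β ^ ((j + (t:ℤ)).toNat) := zpow_natCast β _
    have hrw : β ^ t * (z j * β ^ j) - z j = z j * (β ^ ((j+(t:ℤ)).toNat) - 1) := by
      rw [← hpow]; ring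
    rw [hrw]
    exact DD_mul (hA (hzA j)) (DD_pow_sub_one β _)
  have hDz' : DD β (β ^ t * ∑ j ∈ S, (z' j * β ^ j) - ∑ j ∈ S, z' j) := by
    rw [Finset.mul_sum, ← Finset.sum_sub_distrib]
    apply Finset.sum_induction _ (DD β) (fun _ _ ha hb' => DD_add ha hb') (DD_zero β)
    intro j hj
    simp only [hS, Finset.mem_Icc] at hj
    have hj1 : (0:ℤ) ≤ j + t := by omega
    have htn : (((j+(t:ℤ)).toNat : ℤ)) = j + t := Int.toNat_of_nonneg hj1
    have hpow : (β:ℂ) ^ t * β ^ j = β ^ ((j + (t:ℤ)).toNat) := by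
      calc (β:ℂ) ^ t * β ^ j = β ^ ((t:ℤ)) * β ^ j := by rw [zpow_natCast]
        _ = β ^ ((t:ℤ) + j) := (zpow_add₀ hβ0 _ _).symm
        _ = β ^ ((((j+(t:ℤ)).toNat : ℤ))) := by rw [htn, add_comm]
        _ = β ^ ((j + (t:ℤ)).toNat) := zpow_natCast β _
    have hrw : β ^ t * (z' j * β ^ j) - z' j = z' j * (β ^ ((j+(t:ℤ)).toNat) - 1) := by
      rw [← hpow]; ring
    rw [hrw]
    exact DD_mul (hA (hz'A j)) (DD_pow_sub_one β _)
  have hpowNt : (β:ℂ) ^ t * β ^ ((((r + t + 1 : ℕ)) : ℤ)) = β ^ (r+t+1+t : ℕ) := by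
    calc (β:ℂ) ^ t * β ^ ((((r + t + 1 : ℕ)) : ℤ))
        = β ^ ((t:ℤ)) * β ^ ((((r + t + 1 : ℕ)) : ℤ)) := by rw [← zpow_natCast β t]
      _ = β ^ ((t:ℤ) + (((r + t + 1 : ℕ)) : ℤ)) := (zpow_add₀ hβ0 _ _).symm
      _ = β ^ ((((r+t+1+t : ℕ)) : ℤ)) := by congr 1; push_cast; ring
      _ = β ^ (r+t+1+t : ℕ) := zpow_natCast β _
  have hDb : DD β (b * β ^ (r+t+1+t : ℕ) - b) := by
    have := DD_mul hbZ (DD_pow_sub_one β (r+t+1+t))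
    simpa [mul_sub] using this
  refine ⟨Φ (fun _ => b), hcA, ?_⟩
  have hfinal : b - Φ (fun _ => b) =
      (β ^ t * ∑ j ∈ S, (z' j * β ^ j) - ∑ j ∈ S, z' j)
      - (β ^ t * ∑ j ∈ S, (z j * β ^ j) - ∑ j ∈ S, z j)
      - (b * β ^ (r+t+1+t : ℕ) - b) := by
    linear_combination hQQ - (β:ℂ) ^ t * hzz' - b * hpowNt
  rw [hfinal]
  exact DD_sub (DD_sub hDz' hDz) hDb

theorem stmt12 (β : ℂ) (hβ : 1 < ‖β‖) (A : Set ℂ) (hAfin : A.Finite)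
    (h0 : (0 : ℂ) ∈ A) (hA : A ⊆ (Zring β : Set ℂ))
    (hfull : Apoly β A = (Zring β : Set ℂ))
    (hpar : AllowsParAdd β A) :
    ∀ x ∈ Zring β, (∃ a ∈ A, CongMod β β x a) ∧ ∃ a' ∈ A, CongMod β (β - 1) x a' := by
  intro x hx
  have hβ0 : β ≠ 0 := by
    intro h
    rw [h] at hβ
    simp only [norm_zero] at hβ
    linarith
  have hxA : x ∈ Apoly β A := by rw [hfull]; exact hx
  obtain ⟨n, a, ha, hxe⟩ := hxA
  constructor
  · -- modulo β
    refine ⟨a 0, ha 0, ∑ j ∈ Finset.range n, a (j+1) * β ^ j, ?_, ?_⟩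
    · exact sum_mem fun j _ => mul_mem (hA (ha (j+1))) (pow_mem (beta_mem β) j)
    · rw [hxe, Finset.sum_range_succ' (fun j => a j * β ^ j) n]
      simp only [pow_zero, mul_one, add_sub_cancel_right]
      rw [Finset.mul_sum]
      exact Finset.sum_congr rfl fun j _ => by ring
  · -- modulo β - 1
    have h1 : DD β (x - ∑ j ∈ Finset.range (n+1), a j) := by
      rw [hxe, ← Finset.sum_sub_distrib]
      apply Finset.sum_induction _ (DD β) (fun _ _ p q => DD_add p q) (DD_zero β)
      intro j _
      have hr : a j * β ^ j - a j = a j * (β ^ j - 1) := by ring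
      rw [hr]
      exact DD_mul (hA (ha j)) (DD_pow_sub_one β j)
    have h2 : ∀ m : ℕ, ∃ c ∈ A, DD β ((∑ j ∈ Finset.range m, a j) - c) := by
      intro m
      induction m with
      | zero => exact ⟨0, h0, by simpa using DD_zero β⟩
      | succ m ih =>
        obtain ⟨c, hcA, hc⟩ := ih
        obtain ⟨c', hc'A, hc'⟩ :=
          key_lemma β hβ0 A h0 hA hpar (c + a m) (Set.add_mem_add hcA (ha m))
        refine ⟨c', hc'A, ?_⟩
        have hr : (∑ j ∈ Finset.range (m+1), a j) - c' =
            ((∑ j ∈ Finset.range m, a j) - c) + ((c + a m) - c') := by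
          rw [Finset.sum_range_succ]; ring
        rw [hr]
        exact DD_add hc hc'
    obtain ⟨c, hcA, hc⟩ := h2 (n+1)
    refine ⟨c, hcA, ?_⟩
    have hr : x - c = (x - ∑ j ∈ Finset.range (n+1), a j)
        + ((∑ j ∈ Finset.range (n+1), a j) - c) := by ring
    have : DD β (x - c) := hr ▸ DD_add h1 hc
    exact this
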